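/- Let v ∈ ℕ with v ≥ 1 and b ∈ ℕ with b < 2^v. Suppose the binary digits of Φ(b̄_{v,∞}) are eventually periodic with preperiod u ∈ ℕ and period p ∈ ℕ, p ≥ 1, i.e., R_{u+p}(Φ(b̄_{v,∞})) = R_u(Φ(b̄_{v,∞})). Let t ∈ ℕ be such that tv ≥ u. Then for every positive integer H, R_{tv}(Φ(b̄_{v,t})) ≡ R_{(t+p·2^H)v}(Φ(b̄_{v,t+p·2^H})) (mod 2^{H+2}). -/

import Mathlib

noncomputable section

/-- The inverse of `3` in the ring of 2-adic integers. -/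
def inv3 : ℤ_[2] := Ring.inverse 3

/-- The `j`-th binary digit of a 2-adic integer (as `0` or `1`). -/
def dig (x : ℤ_[2]) (j : ℕ) : ℕ := if Nat.testBit (x.appr (j + 1)) j then 1 else 0

/-- The number of one digits of `x` in positions `< j`. -/
def digCount (x : ℤ_[2]) (j : ℕ) : ℕ := ∑ i ∈ Finset.range j, dig x i

/-- Bernstein's formula for the 3x+1 conjugacy map `Φ`:
if `x = ∑_i 2^{d_i}` with `d_0 < d_1 < ⋯`, then `Φ x = -∑_i 2^{d_i} 3^{-i}`. -/
def Phi (x : ℤ_[2]) : ℤ_[2] :=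
  -∑' j : ℕ, (dig x j : ℤ_[2]) * 2 ^ j * inv3 ^ digCount x j

/-- `L_k(x)`: the unique natural number `< 2^k` congruent to `x` mod `2^k`. -/
def Lk (k : ℕ) (x : ℤ_[2]) : ℕ := x.appr k

theorem two_pow_dvd_sub_appr (k : ℕ) (x : ℤ_[2]) :
    (2 : ℤ_[2]) ^ k ∣ x - (x.appr k : ℤ_[2]) := by
  have h := PadicInt.appr_spec k x
  rw [Ideal.mem_span_singleton] at h
  exact_mod_cast h

theorem exists_Rk (k : ℕ) (x : ℤ_[2]) :
    ∃ z : ℤ_[2], x = (x.appr k : ℤ_[2]) + 2 ^ k * z := by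
  obtain ⟨c, hc⟩ := two_pow_dvd_sub_appr k x
  exact ⟨c, by rw [← hc]; ring⟩

/-- `R_k(x)`: the unique 2-adic integer with `x = L_k(x) + 2^k · R_k(x)`. -/
def Rk (k : ℕ) (x : ℤ_[2]) : ℤ_[2] := (exists_Rk k x).choose

/-- `α(a)`: the number of ones in the binary expansion of `a`. -/
def alphaNat (a : ℕ) : ℕ := (Nat.bits a).count true

/-- `b̄_{v,∞} = b · ∑_{i=0}^∞ 2^{v i}` as a 2-adic integer. -/
def bbar (b v : ℕ) : ℤ_[2] := (b : ℤ_[2]) * ∑' i : ℕ, (2 : ℤ_[2]) ^ (v * i)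

/-- `b̄_{v,t} = b · ∑_{i=0}^{t-1} 2^{v i}` as a natural number. -/
def bbarFin (b v t : ℕ) : ℕ := b * ∑ i ∈ Finset.range t, 2 ^ (v * i)

/-- The farPoint `fP(x,k)`: the least `r` such that no 2-adic congruent to `x`
mod `2^k` is a fixed point of `Φ` mod `2^{k+r}`, and `∞` if no such `r` exists. -/
def fP (x k : ℕ) : ℕ∞ :=
  sInf ((↑) '' {r : ℕ | ∀ z : ℤ_[2],
    (2 : ℤ_[2]) ^ k ∣ z - (x : ℤ_[2]) → ¬ (2 : ℤ_[2]) ^ (k + r) ∣ Phi z - z})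

-- AUX START
lemma two_nz : (2 : ℤ_[2]) ≠ 0 := two_ne_zero

lemma norm_two_pow (k : ℕ) : ‖(2:ℤ_[2])^k‖ = (2:ℝ)^(-(k:ℤ)) := by
  simpa using PadicInt.norm_p_pow (p := 2) k

lemma norm_two_pow' (k : ℕ) : ‖(2:ℤ_[2])^k‖ = (1/2:ℝ)^k := by
  rw [norm_two_pow, zpow_neg, zpow_natCast, one_div, inv_pow]

lemma int_dvd_of_dvd {k : ℕ} {a : ℤ} (h : (2:ℤ_[2])^k ∣ (a : ℤ_[2])) : (2:ℤ)^k ∣ a := by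
  obtain ⟨c, hc⟩ := h
  have h2 : ‖(a : ℤ_[2])‖ ≤ (2:ℝ)^(-(k:ℤ)) := by
    rw [hc]
    calc ‖(2:ℤ_[2])^k * c‖ = ‖(2:ℤ_[2])^k‖ * ‖c‖ := norm_mul _ _
    _ ≤ ‖(2:ℤ_[2])^k‖ * 1 := by gcongr; exact c.norm_le_one
    _ = (2:ℝ)^(-(k:ℤ)) := by rw [mul_one, norm_two_pow]
  have h3 := (PadicInt.norm_int_le_pow_iff_dvd (p := 2) (k := a) (n := k)).mp (by exact_mod_cast h2)
  exact_mod_cast h3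

lemma appr_unique (k : ℕ) (x : ℤ_[2]) (n : ℕ) (hn : n < 2^k)
    (h : (2:ℤ_[2])^k ∣ x - (n:ℤ_[2])) : x.appr k = n := by
  have h2 := two_pow_dvd_sub_appr k x
  have h3 : (2:ℤ_[2])^k ∣ (((n:ℤ) - (x.appr k : ℤ) : ℤ) : ℤ_[2]) := by
    have e : (((n:ℤ) - (x.appr k:ℤ) : ℤ) : ℤ_[2]) = (x - (x.appr k:ℤ_[2])) - (x - (n:ℤ_[2])) := by
      push_cast; ring
    rw [e]; exact dvd_sub h2 h
  have h4 : (2:ℤ)^k ∣ (n:ℤ) - x.appr k := int_dvd_of_dvd h3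
  have h5 := PadicInt.appr_lt x k
  rw [show ((2:ℤ))^k = ((2^k:ℕ):ℤ) by push_cast; ring] at h4
  have h6 : (n:ℤ) - x.appr k = 0 := Int.eq_zero_of_abs_lt_dvd h4 (by
    rw [abs_lt]; constructor <;> omega)
  omega

lemma appr_congr (k : ℕ) {x y : ℤ_[2]} (h : (2:ℤ_[2])^k ∣ x - y) : x.appr k = y.appr k := by
  apply appr_unique k x (y.appr k) (PadicInt.appr_lt y k)
  have e : x - (y.appr k : ℤ_[2]) = (x - y) + (y - y.appr k) := by ring
  rw [e]; exact dvd_add h (two_pow_dvd_sub_appr k y)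

lemma dig_congr {x y : ℤ_[2]} (j : ℕ) (h : (2:ℤ_[2])^(j+1) ∣ x - y) : dig x j = dig y j := by
  unfold dig; rw [appr_congr (j+1) h]

lemma appr_natCast (k n : ℕ) : ((n:ℕ):ℤ_[2]).appr k = n % 2^k := by
  apply appr_unique k _ _ (Nat.mod_lt n (by positivity))
  refine ⟨(n / 2^k : ℕ), ?_⟩
  have e : n % 2^k + 2^k * (n / 2^k) = n := Nat.mod_add_div n (2^k)
  have e2 : ((n:ℕ):ℤ_[2]) = ((n % 2^k : ℕ):ℤ_[2]) + 2^k * ((n / 2^k : ℕ):ℤ_[2]) := by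
    conv_lhs => rw [← e]
    push_cast; ring
  rw [e2]; push_cast; ring

lemma dig_natCast (n j : ℕ) : dig (n:ℤ_[2]) j = if n.testBit j then 1 else 0 := by
  unfold dig
  rw [appr_natCast]
  congr 1
  rw [Nat.testBit_mod_two_pow]
  simp

lemma nat_add_lt {a b k s : ℕ} (ha : a < 2^k) (hb : b < 2^s) : a + 2^k * b < 2^(k+s) := by
  have h := Nat.mul_le_mul_left (2^k) (Nat.succ_le_of_lt hb)
  rw [Nat.mul_succ] at h
  rw [pow_add]
  omega

lemma testBit_add_mul {n k m : ℕ} (hn : n < 2^k) (j : ℕ) :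
    (n + 2^k * m).testBit (k + j) = m.testBit j := by
  rw [Nat.testBit_eq_decide_div_mod_eq, Nat.testBit_eq_decide_div_mod_eq]
  have e : (n + 2^k * m) / 2^(k+j) = m / 2^j := by
    rw [pow_add, ← Nat.div_div_eq_div_mul, Nat.add_mul_div_left _ _ (by positivity),
      Nat.div_eq_of_lt hn, zero_add]
  rw [e]

lemma dig_shift_lt {n k j : ℕ} (y : ℤ_[2]) (h : j < k) :
    dig ((n:ℤ_[2]) + 2^k*y) j = dig (n:ℤ_[2]) j := by
  apply dig_congr
  refine ⟨2^(k-(j+1)) * y, ?_⟩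
  have e : j + 1 + (k - (j+1)) = k := by omega
  rw [← mul_assoc, ← pow_add, e]
  ring

lemma dig_shift_ge {n k : ℕ} (hn : n < 2^k) (y : ℤ_[2]) (j : ℕ) :
    dig ((n:ℤ_[2]) + 2^k*y) (k+j) = dig y j := by
  have happr : ((n:ℤ_[2]) + 2^k*y).appr (k+j+1) = n + 2^k * (y.appr (j+1)) := by
    apply appr_unique
    · exact nat_add_lt hn (PadicInt.appr_lt y (j+1))
    · obtain ⟨w, hw⟩ := two_pow_dvd_sub_appr (j+1) y
      refine ⟨w, ?_⟩
      push_cast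
      linear_combination (2^k : ℤ_[2]) * hw
  unfold dig
  rw [happr, testBit_add_mul hn j]

lemma digCount_shift_le {n k j : ℕ} (y : ℤ_[2]) (h : j ≤ k) :
    digCount ((n:ℤ_[2]) + 2^k*y) j = digCount (n:ℤ_[2]) j := by
  unfold digCount
  exact Finset.sum_congr rfl fun i hi => dig_shift_lt y (lt_of_lt_of_le (Finset.mem_range.mp hi) h)

lemma digCount_shift_ge {n k : ℕ} (hn : n < 2^k) (y : ℤ_[2]) (j : ℕ) :
    digCount ((n:ℤ_[2]) + 2^k*y) (k+j) = digCount (n:ℤ_[2]) k + digCount y j := by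
  unfold digCount
  rw [Finset.sum_range_add]
  congr 1
  · exact Finset.sum_congr rfl fun i hi => dig_shift_lt y (Finset.mem_range.mp hi)
  · exact Finset.sum_congr rfl fun i _ => dig_shift_ge hn y i

def phiTerm (x : ℤ_[2]) (j : ℕ) : ℤ_[2] := (dig x j : ℤ_[2]) * 2 ^ j * inv3 ^ digCount x j

lemma Phi_eq (x : ℤ_[2]) : Phi x = -∑' j : ℕ, phiTerm x j := rfl

lemma dig_le_one (x : ℤ_[2]) (j : ℕ) : dig x j ≤ 1 := by
  unfold dig; split <;> omega

lemma summable_phiTerm (x : ℤ_[2]) : Summable (phiTerm x) := by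
  apply Summable.of_norm_bounded
    (summable_geometric_of_lt_one (by norm_num : (0:ℝ) ≤ 1/2) (by norm_num))
  intro j
  unfold phiTerm
  calc ‖(dig x j : ℤ_[2]) * 2 ^ j * inv3 ^ digCount x j‖
      = ‖(dig x j : ℤ_[2]) * 2 ^ j‖ * ‖inv3 ^ digCount x j‖ := norm_mul _ _
    _ = ‖(dig x j : ℤ_[2])‖ * ‖(2:ℤ_[2]) ^ j‖ * ‖inv3 ^ digCount x j‖ := by
        rw [norm_mul]
    _ ≤ 1 * ((1/2:ℝ)^j) * 1 := by
        rw [norm_two_pow']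
        gcongr
        · exact PadicInt.norm_le_one _
        · exact PadicInt.norm_le_one _
    _ = (1/2:ℝ)^j := by ring

lemma Phi_natCast_lt {n k : ℕ} (hn : n < 2^k) :
    Phi (n:ℤ_[2]) = -∑ j ∈ Finset.range k, phiTerm (n:ℤ_[2]) j := by
  rw [Phi_eq]
  congr 1
  apply tsum_eq_sum
  intro j hj
  rw [Finset.mem_range, not_lt] at hj
  have hd : dig (n:ℤ_[2]) j = 0 := by
    rw [dig_natCast,
      Nat.testBit_eq_false_of_lt (lt_of_lt_of_le hn (Nat.pow_le_pow_right (by norm_num) hj))]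
    rfl
  unfold phiTerm
  rw [hd]
  simp

lemma Phi_shift {n k : ℕ} (hn : n < 2^k) (y : ℤ_[2]) :
    Phi ((n:ℤ_[2]) + 2^k * y) = Phi (n:ℤ_[2]) + 2^k * inv3 ^ digCount (n:ℤ_[2]) k * Phi y := by
  have hs := summable_phiTerm ((n:ℤ_[2]) + 2^k*y)
  have hsplit := Summable.sum_add_tsum_nat_add (f := phiTerm ((n:ℤ_[2]) + 2^k*y)) k hs
  have h1 : ∑ i ∈ Finset.range k, phiTerm ((n:ℤ_[2]) + 2^k*y) i
      = ∑ i ∈ Finset.range k, phiTerm (n:ℤ_[2]) i := by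
    refine Finset.sum_congr rfl fun i hi => ?_
    rw [Finset.mem_range] at hi
    unfold phiTerm
    rw [dig_shift_lt y hi, digCount_shift_le y (le_of_lt hi)]
  have h2 : ∀ i:ℕ, phiTerm ((n:ℤ_[2]) + 2^k*y) (i+k)
      = (2^k * inv3 ^ digCount (n:ℤ_[2]) k) * phiTerm y i := by
    intro i
    rw [add_comm i k]
    unfold phiTerm
    rw [dig_shift_ge hn y i, digCount_shift_ge hn y i, pow_add (2:ℤ_[2]) k i, pow_add inv3]
    ring
  have h3 : ∑' i:ℕ, phiTerm ((n:ℤ_[2]) + 2^k*y) (i+k)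
      = (2^k * inv3 ^ digCount (n:ℤ_[2]) k) * ∑' i, phiTerm y i := by
    calc ∑' i:ℕ, phiTerm ((n:ℤ_[2]) + 2^k*y) (i+k)
        = ∑' i:ℕ, (2^k * inv3 ^ digCount (n:ℤ_[2]) k) * phiTerm y i := tsum_congr h2
      _ = _ := Summable.tsum_mul_left _ (summable_phiTerm y)
  rw [Phi_eq ((n:ℤ_[2]) + 2^k*y), ← hsplit, h1, h3, Phi_natCast_lt hn, Phi_eq y]
  ring

lemma Rk_spec (k : ℕ) (x : ℤ_[2]) : x = (x.appr k : ℤ_[2]) + 2^k * Rk k x :=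
  (exists_Rk k x).choose_spec

lemma Rk_unique {k : ℕ} {x z : ℤ_[2]} (h : x = (x.appr k : ℤ_[2]) + 2^k * z) : Rk k x = z := by
  have h2 := Rk_spec k x
  apply mul_left_cancel₀ (pow_ne_zero k two_nz)
  linear_combination h - h2

lemma appr_add (k s : ℕ) (x : ℤ_[2]) :
    x.appr (k+s) = x.appr k + 2^k * ((Rk k x).appr s) := by
  apply appr_unique
  · exact nat_add_lt (PadicInt.appr_lt x k) (PadicInt.appr_lt (Rk k x) s)
  · obtain ⟨c, hc⟩ := two_pow_dvd_sub_appr s (Rk k x)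
    refine ⟨c, ?_⟩
    push_cast
    have h1 := Rk_spec k x
    linear_combination h1 + (2^k : ℤ_[2]) * hc

lemma Rk_add (k s : ℕ) (x : ℤ_[2]) : Rk (k+s) x = Rk s (Rk k x) := by
  apply Rk_unique
  rw [appr_add]
  push_cast
  have h1 := Rk_spec k x
  have h2 := Rk_spec s (Rk k x)
  linear_combination h1 + (2^k : ℤ_[2]) * h2

lemma Rk_per {x : ℤ_[2]} {u p : ℕ} (h : Rk (u+p) x = Rk u x) (s : ℕ) :
    Rk (u+(s+p)) x = Rk (u+s) x := by
  rw [show u+(s+p) = (u+p)+s by ring, Rk_add, h, ← Rk_add]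

lemma Rk_per_mul {x : ℤ_[2]} {u p : ℕ} (h : Rk (u+p) x = Rk u x) (s m : ℕ) :
    Rk (u+(s+m*p)) x = Rk (u+s) x := by
  induction m with
  | zero => simp
  | succ m ih =>
      rw [show s + (m+1)*p = (s + m*p) + p by ring, Rk_per h, ih]

lemma isUnit_three : IsUnit (3:ℤ_[2]) := by
  rw [PadicInt.isUnit_iff]
  have h1 : ‖(3:ℤ_[2])‖ ≤ 1 := PadicInt.norm_le_one _
  have h2 : ¬ ‖(((3:ℤ)):ℤ_[2])‖ < 1 := by
    rw [PadicInt.norm_int_lt_one_iff_dvd]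
    omega
  have e : ((3:ℤ):ℤ_[2]) = (3:ℤ_[2]) := by push_cast; ring
  rw [e] at h2
  linarith

lemma int_pow3 : ∀ H : ℕ, 1 ≤ H → (2:ℤ)^(H+2) ∣ 3^(2^H) - 1 := by
  intro H
  induction H with
  | zero => omega
  | succ H ih =>
      intro _
      rcases Nat.eq_zero_or_pos H with h0 | h1
      · subst h0; decide
      · have hih := ih h1
        have e : (3:ℤ)^(2^(H+1)) - 1 = (3^(2^H) - 1) * (3^(2^H) + 1) := by
          rw [pow_succ 2 H, pow_mul]; ring
        have h2 : (2:ℤ) ∣ 3^(2^H) + 1 := by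
          have hodd : Odd ((3:ℤ)^(2^H)) := Odd.pow (by decide)
          obtain ⟨w, hw⟩ := hodd
          exact ⟨w+1, by omega⟩
        rw [e, show H+1+2 = (H+2)+1 by ring, pow_succ]
        exact mul_dvd_mul hih h2

lemma dvd_inv3_pow (H m : ℕ) (hH : 1 ≤ H) : (2:ℤ_[2])^(H+2) ∣ inv3^(2^H*m) - 1 := by
  have hia : inv3 * 3 = 1 := Ring.inverse_mul_cancel 3 isUnit_three
  have h1 : (2:ℤ_[2])^(H+2) ∣ (3:ℤ_[2])^(2^H) - 1 := by
    obtain ⟨w, hw⟩ := int_pow3 H hH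
    refine ⟨(w:ℤ_[2]), ?_⟩
    have := congrArg (fun z : ℤ => (z : ℤ_[2])) hw
    push_cast at this
    convert this using 2 <;> push_cast <;> ring
  have h2 : (2:ℤ_[2])^(H+2) ∣ (3:ℤ_[2])^(2^H*m) - 1 := by
    refine dvd_trans h1 ?_
    have := sub_dvd_pow_sub_pow ((3:ℤ_[2])^(2^H)) 1 m
    rwa [one_pow, ← pow_mul] at this
  obtain ⟨w, hw⟩ := h2
  refine ⟨-inv3^(2^H*m) * w, ?_⟩
  have hinv : inv3^(2^H*m) * 3^(2^H*m) = 1 := by rw [← mul_pow, hia, one_pow]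
  linear_combination (-(inv3^(2^H*m))) * hw + hinv

lemma summable_geom {v : ℕ} (hv : 1 ≤ v) : Summable (fun i : ℕ => (2:ℤ_[2])^(v*i)) := by
  apply Summable.of_norm_bounded
    (summable_geometric_of_lt_one (by norm_num : (0:ℝ) ≤ 1/2) (by norm_num))
  intro i
  rw [norm_two_pow']
  exact pow_le_pow_of_le_one (by norm_num) (by norm_num) (Nat.le_mul_of_pos_left i hv)

lemma bbar_decomp (b : ℕ) {v : ℕ} (hv : 1 ≤ v) (s : ℕ) :
    bbar b v = ((bbarFin b v s : ℕ) : ℤ_[2]) + 2^(v*s) * bbar b v := by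
  have hsum := summable_geom hv
  have h := Summable.sum_add_tsum_nat_add (f := fun i : ℕ => (2:ℤ_[2])^(v*i)) s hsum
  have h2 : ∑' i:ℕ, (2:ℤ_[2])^(v*(i+s)) = 2^(v*s) * ∑' i:ℕ, (2:ℤ_[2])^(v*i) := by
    have e : ∀ i:ℕ, (2:ℤ_[2])^(v*(i+s)) = 2^(v*s) * 2^(v*i) := fun i => by
      rw [← pow_add]; congr 1; ring
    calc ∑' i:ℕ, (2:ℤ_[2])^(v*(i+s)) = ∑' i:ℕ, 2^(v*s) * (2:ℤ_[2])^(v*i) := tsum_congr e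
      _ = _ := Summable.tsum_mul_left _ hsum
  have h' : ∑ i ∈ Finset.range s, (2:ℤ_[2])^(v*i) + ∑' i:ℕ, (2:ℤ_[2])^(v*(i+s))
      = ∑' i:ℕ, (2:ℤ_[2])^(v*i) := h
  rw [h2] at h'
  unfold bbar bbarFin
  push_cast
  linear_combination (-((b:ℕ):ℤ_[2])) * h'

lemma bbarFin_succ (b v s : ℕ) : bbarFin b v (s+1) = bbarFin b v s + 2^(v*s) * b := by
  unfold bbarFin
  rw [Finset.sum_range_succ]
  ring

lemma bbarFin_lt {b v : ℕ} (hb : b < 2^v) : ∀ s, bbarFin b v s < 2^(v*s) := by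
  intro s
  induction s with
  | zero => simp [bbarFin]
  | succ s ih =>
      rw [bbarFin_succ, show v*(s+1) = v*s + v by ring, pow_add]
      have h2 : 2^(v*s) * 1 + 2^(v*s) * b ≤ 2^(v*s) * 2^v := by
        rw [← Nat.mul_add]
        exact Nat.mul_le_mul_left _ (by omega)
      omega

lemma digCount_bbarFin {b v : ℕ} (hb : b < 2^v) :
    ∀ s, digCount ((bbarFin b v s : ℕ):ℤ_[2]) (v*s) = s * digCount ((b:ℕ):ℤ_[2]) v := by
  intro s
  induction s with
  | zero => simp [digCount]
  | succ s ih =>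
      have e : ((bbarFin b v (s+1) : ℕ):ℤ_[2]) = ((bbarFin b v s : ℕ):ℤ_[2]) + 2^(v*s) * (b:ℤ_[2]) := by
        rw [bbarFin_succ]; push_cast; ring
      rw [e, show v*(s+1) = v*s + v by ring, digCount_shift_ge (bbarFin_lt hb s) _ v, ih]
      ring


end

/-- periodicity of `Φ` on strictly repeating 2-adics: if the digits of
`Φ(b̄_{v,∞})` are eventually periodic with preperiod `u` and period `p ≥ 1`, and
`tv ≥ u`, then for every `H ≥ 1`,
`R_{tv}(Φ(b̄_{v,t})) ≡ R_{(t+p·2^H)v}(Φ(b̄_{v,t+p·2^H})) (mod 2^{H+2})`. -/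
theorem stmt13 (v : ℕ) (hv : 1 ≤ v) (b : ℕ) (hb : b < 2 ^ v)
    (u p : ℕ) (hp : 1 ≤ p)
    (hper : Rk (u + p) (Phi (bbar b v)) = Rk u (Phi (bbar b v)))
    (t : ℕ) (ht : u ≤ t * v) (H : ℕ) (hH : 1 ≤ H) :
    (2 : ℤ_[2]) ^ (H + 2) ∣
      Rk (t * v) (Phi ((bbarFin b v t : ℕ) : ℤ_[2])) -
      Rk ((t + p * 2 ^ H) * v) (Phi ((bbarFin b v (t + p * 2 ^ H) : ℕ) : ℤ_[2])) := by
  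
  set c := digCount ((b:ℕ):ℤ_[2]) v with hc
  have key : ∀ s:ℕ, Rk (v*s) (Phi ((bbarFin b v s : ℕ):ℤ_[2]))
      = Rk (v*s) (Phi (bbar b v)) - inv3 ^ (s * c) * Phi (bbar b v) := by
    intro s
    have h1 : Phi (bbar b v) = Phi ((bbarFin b v s : ℕ):ℤ_[2])
        + 2^(v*s) * inv3 ^ (s * c) * Phi (bbar b v) := by
      conv_lhs => rw [bbar_decomp b hv s]
      rw [Phi_shift (bbarFin_lt hb s) (bbar b v), digCount_bbarFin hb s]
    have happr : (Phi ((bbarFin b v s:ℕ):ℤ_[2])).appr (v*s) = (Phi (bbar b v)).appr (v*s) :=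
      appr_congr (v*s) ⟨-(inv3 ^ (s*c) * Phi (bbar b v)), by linear_combination -h1⟩
    have e1 := Rk_spec (v*s) (Phi (bbar b v))
    have e2 := Rk_spec (v*s) (Phi ((bbarFin b v s:ℕ):ℤ_[2]))
    rw [happr] at e2
    apply mul_left_cancel₀ (pow_ne_zero (v*s) two_nz)
    linear_combination e1 - e2 - h1
  have hle : u ≤ v*t := by rwa [mul_comm] at ht
  have hper2 : Rk (v*(t+p*2^H)) (Phi (bbar b v)) = Rk (v*t) (Phi (bbar b v)) := by
    have h1 := Rk_per_mul hper (v*t - u) (v*2^H)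
    have e1 : u + (v*t - u) = v*t := Nat.add_sub_cancel' hle
    have e2 : u + ((v*t - u) + (v*2^H)*p) = v*(t+p*2^H) := by
      calc u + ((v*t - u) + (v*2^H)*p) = (u + (v*t - u)) + (v*2^H)*p := by ring
        _ = v*t + (v*2^H)*p := by rw [e1]
        _ = v*(t+p*2^H) := by ring
    rw [← add_assoc] at h1
    rw [show u + (v*t-u) + (v*2^H)*p = u + ((v*t-u) + (v*2^H)*p) by ring, e2, e1] at h1
    exact h1
  rw [show t*v = v*t from mul_comm t v,
      show (t+p*2^H)*v = v*(t+p*2^H) from mul_comm _ v,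
      key t, key (t+p*2^H), hper2]
  obtain ⟨w, hw⟩ := dvd_inv3_pow H (p*c) hH
  refine ⟨inv3^(t*c) * w * Phi (bbar b v), ?_⟩
  have e : inv3^((t+p*2^H)*c) = inv3^(t*c) * inv3^(2^H*(p*c)) := by
    rw [← pow_add]; congr 1; ring
  rw [e]
  linear_combination (inv3^(t*c) * Phi (bbar b v)) * hw
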